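/- Let G be a bicolored multigraph on n vertices with red edge set R and black edge set B, let a, b be positive integers with k = a + b, and suppose |E| = k·n − k. Then the pure condition C_G of the generic [a,b]-frame (tied down at any fixed vertex u) is nonzero as a polynomial if and only if there exists B' ⊆ B such that the edge set R ∪ B' is the disjoint union of a spanning trees and the edge set B \ B' is the disjoint union of b spanning trees. -/

import Mathlib

open MvPolynomial

/-- The sub-multigraph with edge set `F` (of a multigraph with endpoint maps
`tail`, `head`) is `(k,ℓ)`-sparse: every nonempty vertex subset `W` induces at
most `k·|W| − ℓ` edges of `F`. -/
def SparseOn {V E : Type} [DecidableEq V] (tail head : E → V) (k ℓ : ℤ)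
    (F : Finset E) : Prop :=
  ∀ W : Finset V, W.Nonempty →
    ((F.filter fun e => tail e ∈ W ∧ head e ∈ W).card : ℤ) ≤ k * (W.card : ℤ) - ℓ

/-- The sub-multigraph with edge set `F` of a bicolored multigraph (red edges are
those with `red e = true`) is `[a,b]`-sparse: there is a subset `B'` of the black
edges of `F` such that the red edges of `F` together with `B'` form an `(a,a)`-sparse
multigraph and the remaining black edges of `F` form a `(b,b)`-sparse multigraph. -/
def ABSparseOn {V E : Type} [DecidableEq V] [DecidableEq E] (tail head : E → V)
    (red : E → Bool) (a b : ℕ) (F : Finset E) : Prop :=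
  ∃ B' ⊆ F.filter fun e => red e = false,
    SparseOn tail head (a : ℤ) (a : ℤ) ((F.filter fun e => red e = true) ∪ B') ∧
    SparseOn tail head (b : ℤ) (b : ℤ) ((F.filter fun e => red e = false) \ B')

/-- `T ⊆ E` is a spanning tree: it has `n − 1` edges and the graph on `Fin n`
with edge set `T` is connected. -/
def IsSpanningTree {n : ℕ} {E : Type} (tail head : E → Fin n) (T : Finset E) : Prop :=
  T.card = n - 1 ∧
    (SimpleGraph.fromRel fun u v => ∃ e ∈ T, tail e = u ∧ head e = v).Connected

/-- The edge set `F` is the disjoint union of `a` spanning trees. -/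
def IsTreePartition {n : ℕ} {E : Type} [DecidableEq E] (tail head : E → Fin n)
    (a : ℕ) (F : Finset E) : Prop :=
  ∃ T : Fin a → Finset E, (∀ i, IsSpanningTree tail head (T i)) ∧
    (∀ i j, i ≠ j → Disjoint (T i) (T j)) ∧ Finset.univ.biUnion T = F

/-- `W` is a proper block of a `(k,k)`-graph on `n` vertices: `2 ≤ |W| < n` and the
induced multigraph on `W` is `(k,k)`-tight (i.e. `(k,k)`-sparse with exactly
`k·|W| − k` induced edges). -/
def IsProperBlock {n : ℕ} {E : Type} [Fintype E] (tail head : E → Fin n) (k : ℕ)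
    (W : Finset (Fin n)) : Prop :=
  2 ≤ W.card ∧ W.card < n ∧
    (∀ W' ⊆ W, W'.Nonempty →
      ((Finset.univ.filter fun e => tail e ∈ W' ∧ head e ∈ W').card : ℤ) ≤
        (k : ℤ) * (W'.card : ℤ) - (k : ℤ)) ∧
    ((Finset.univ.filter fun e => tail e ∈ W ∧ head e ∈ W).card : ℤ) =
      (k : ℤ) * (W.card : ℤ) - (k : ℤ)

/-- The vertex type of the contraction `G/H` by the vertex set `W`: the vertices
outside `W` together with a single new vertex (`Sum.inr ()`). -/
abbrev ContrV (n : ℕ) (W : Finset (Fin n)) : Type := {v : Fin n // v ∉ W} ⊕ Unit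

/-- The projection of the vertices of `G` onto the vertices of `G/H`. -/
def contrMap {n : ℕ} (W : Finset (Fin n)) (v : Fin n) : ContrV n W :=
  if h : v ∈ W then Sum.inr () else Sum.inl ⟨v, h⟩

/-- The pure condition of an `[a,b]`-frame: the determinant of the generic rigidity
matrix with the standard tie-down at `u`.  Rows are indexed by edges `E'` together
with `k` tie-down rows, transported to the column index type `V × Fin k` by the
equivalence `σ`.  The row of an edge `e` has the variable `X (var e, i)` in column
`(tail e, i)` and its negative in column `(head e, i)`, except that rows of red edges
vanish in all columns `(·, i)` with `a ≤ i`.  The `i`-th tie-down row has a `1` in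
column `(u, i)` and `0` elsewhere.  The polynomial lives in
`S = MvPolynomial (E × Fin k) ℝ`, the variables of an edge `e` of the (sub)graph
being indexed via `var e : E`. -/
noncomputable def pureCond {E E' V : Type} [Fintype V] [DecidableEq V] (k a : ℕ)
    (tail head : E' → V) (red : E' → Bool) (var : E' → E) (u : V)
    (σ : (E' ⊕ Fin k) ≃ (V × Fin k)) : MvPolynomial (E × Fin k) ℝ :=
  Matrix.det (Matrix.of fun r c : V × Fin k =>
    Sum.elim
      (fun e =>
        if red e = true ∧ a ≤ (c.2 : ℕ) then 0
        else if c.1 = tail e then (X (var e, c.2) : MvPolynomial (E × Fin k) ℝ)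
        else if c.1 = head e then -X (var e, c.2)
        else 0)
      (fun i => if c = (u, i) then 1 else 0)
      (σ.symm r))

/-- The pure condition of a `k`-frame (uncolored body-and-bar setting): the
determinant of the generic rigidity matrix with the standard tie-down at `u`. -/
noncomputable def pureCondBar {E E' V : Type} [Fintype V] [DecidableEq V] (k : ℕ)
    (tail head : E' → V) (var : E' → E) (u : V)
    (σ : (E' ⊕ Fin k) ≃ (V × Fin k)) : MvPolynomial (E × Fin k) ℝ :=
  pureCond k k tail head (fun _ => false) var u σ

/-- The rigidity matrix `M(G(p))` of an `[a,b]`-frame evaluated at the point `p`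
(no tie-down rows). -/
def rigidityMatrixR {E : Type} {n k : ℕ} (a : ℕ) (tail head : E → Fin n)
    (red : E → Bool) (p : E × Fin k → ℝ) : Matrix E (Fin n × Fin k) ℝ :=
  Matrix.of fun e c =>
    if red e = true ∧ a ≤ (c.2 : ℕ) then 0
    else if c.1 = tail e then p (e, c.2)
    else if c.1 = head e then -p (e, c.2)
    else 0

/-- The edge `e` is in the support of the polynomial `f`: some variable `X (e, i)`
occurs in `f`. -/
def InSupport {E : Type} [DecidableEq E] {k : ℕ} (f : MvPolynomial (E × Fin k) ℝ)
    (e : E) : Prop :=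
  ∃ i : Fin k, (e, i) ∈ f.vars

/-- `p` is a generic point of `V(f)`: `f` vanishes at `p` and every polynomial
vanishing at `p` is divisible by `f`. -/
def GenericOn {E : Type} {k : ℕ} (f : MvPolynomial (E × Fin k) ℝ)
    (p : E × Fin k → ℝ) : Prop :=
  eval p f = 0 ∧ ∀ h : MvPolynomial (E × Fin k) ℝ, eval p h = 0 → f ∣ h

/-- A bicolored multigraph is an `[a,b]`-circuit if it is not `[a,b]`-sparse but every
proper subset of its edge set is `[a,b]`-sparse. -/
def ABCircuit {V E : Type} [Fintype E] [DecidableEq V] [DecidableEq E]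
    (tail head : E → V) (red : E → Bool) (a b : ℕ) : Prop :=
  ¬ ABSparseOn tail head red a b (Finset.univ : Finset E) ∧
    ∀ F : Finset E, F ⊂ Finset.univ → ABSparseOn tail head red a b F

/-- An `[a,b]`-graph is irreducible if for every edge `e₀`, adding a new edge parallel
to `e₀` with the same endpoints and color yields an `[a,b]`-circuit. -/
def ABIrreducibleGraph {V E : Type} [Fintype E] [DecidableEq V] [DecidableEq E]
    (tail head : E → V) (red : E → Bool) (a b : ℕ) : Prop :=
  ∀ e₀ : E,
    ABCircuit (Sum.elim tail fun _ : Unit => tail e₀)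
      (Sum.elim head fun _ : Unit => head e₀)
      (Sum.elim red fun _ : Unit => red e₀) a b

/-- The out-degree of the vertex `v` under the orientation `o` (`o e = true` means `e`
is directed from `tail e` to `head e`, `o e = false` the reverse). -/
def outDeg {n : ℕ} {E : Type} [Fintype E] (tail head : E → Fin n) (o : E → Bool)
    (v : Fin n) : ℕ :=
  (Finset.univ.filter fun e =>
    (o e = true ∧ tail e = v) ∨ (o e = false ∧ head e = v)).card

/-- The orientation `o` has a directed cycle (polygon): a nonempty closed walk
traversing distinct edges, each in its assigned direction. -/
def HasDirCycle {n : ℕ} {E : Type} (tail head : E → Fin n) (o : E → Bool) : Prop :=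
  ∃ m : ℕ, 0 < m ∧ ∃ (es : Fin m → E) (vs : Fin (m + 1) → Fin n),
    Function.Injective es ∧ vs 0 = vs (Fin.last m) ∧
    ∀ j : Fin m,
      (o (es j) = true ∧ tail (es j) = vs j.castSucc ∧ head (es j) = vs j.succ) ∨
      (o (es j) = false ∧ head (es j) = vs j.castSucc ∧ tail (es j) = vs j.succ)


/-! ### Auxiliary lemmas for `stmt0` -/

section StmtAux
open Finset

set_option linter.unusedSectionVars false

section GraphLemmas
variable {n : ℕ} {E : Type} (tail head : E → Fin n)

/-- The graph of an edge set. -/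
private def eGraph (T : Finset E) : SimpleGraph (Fin n) :=
  SimpleGraph.fromRel fun u v => ∃ e ∈ T, tail e = u ∧ head e = v

private lemma eGraph_reachable_eq {T : Finset E} (x : Fin n → ℝ)
    (hx : ∀ e ∈ T, x (tail e) = x (head e)) {v w : Fin n}
    (h : (eGraph tail head T).Reachable v w) : x v = x w := by
  obtain ⟨p⟩ := h
  induction p with
  | nil => rfl
  | cons hadj _ ih =>
    rw [eGraph, SimpleGraph.fromRel_adj] at hadj
    obtain ⟨-, ⟨e, he, h1, h2⟩ | ⟨e, he, h1, h2⟩⟩ := hadj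
    · rw [← ih, ← h1, ← h2, hx e he]
    · rw [← ih, ← h1, ← h2, hx e he]

/-- connected implies the kernel condition is trivial -/
private lemma eGraph_kernel_of_connected {T : Finset E} (u : Fin n)
    (hconn : (eGraph tail head T).Connected) (x : Fin n → ℝ)
    (hx : ∀ e ∈ T, x (tail e) = x (head e)) (hu : x u = 0) : x = 0 := by
  funext v
  have := eGraph_reachable_eq tail head x hx (hconn u v)
  rw [← this, hu]; rfl

/-- not connected gives a nontrivial kernel vector -/
private lemma eGraph_not_connected {T : Finset E} (u : Fin n)
    (hconn : ¬ (eGraph tail head T).Connected) :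
    ∃ x : Fin n → ℝ, x ≠ 0 ∧ x u = 0 ∧ ∀ e ∈ T, x (tail e) = x (head e) := by
  have hne : Nonempty (Fin n) := ⟨u⟩
  rw [SimpleGraph.connected_iff] at hconn
  push_neg at hconn
  obtain ⟨v, hv⟩ : ∃ v, ¬ (eGraph tail head T).Reachable u v := by
    by_contra h; push_neg at h
    exact (hconn fun a b => ((h a).symm.trans (h b))).false u
  classical
  refine ⟨fun w => if (eGraph tail head T).Reachable u w then 0 else 1, ?_, ?_, ?_⟩
  · intro h0
    have := congrFun h0 v
    simp only [hv, if_false] at this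
    exact one_ne_zero this
  · simp [SimpleGraph.Reachable.refl]
  · intro e he
    have hadj : (eGraph tail head T).Adj (tail e) (head e) ∨ tail e = head e := by
      by_cases hth : tail e = head e
      · exact Or.inr hth
      · exact Or.inl ((SimpleGraph.fromRel_adj _ _ _).2 ⟨hth, Or.inl ⟨e, he, rfl, rfl⟩⟩)
    rcases hadj with hadj | hadj
    · have : (eGraph tail head T).Reachable u (tail e) ↔
          (eGraph tail head T).Reachable u (head e) :=
        ⟨fun h => h.trans hadj.reachable, fun h => h.trans hadj.symm.reachable⟩
      by_cases h1 : (eGraph tail head T).Reachable u (tail e)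
      · simp only []; rw [if_pos h1, if_pos (this.mp h1)]
      · simp only []; rw [if_neg h1, if_neg fun h2 => h1 (this.mpr h2)]
    · rw [hadj]

/-- A connected graph on `n` vertices needs at least `n - 1` edges. -/
private lemma card_le_of_connected [DecidableEq E] {T : Finset E} (u : Fin n)
    (hconn : (eGraph tail head T).Connected) : n - 1 ≤ T.card := by
  classical
  set G := eGraph tail head T with hG
  -- for each v ≠ u, find an edge towards u
  have key : ∀ v : Fin n, v ≠ u → ∃ e ∈ T,
      (tail e = v ∧ G.dist u (head e) < G.dist u v) ∨
      (head e = v ∧ G.dist u (tail e) < G.dist u v) := by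
    intro v hv
    have hreach : G.Reachable v u := hconn v u
    have hd : 0 < G.dist v u := hreach.pos_dist_of_ne hv
    obtain ⟨p, hp⟩ := hreach.exists_walk_length_eq_dist
    cases p with
    | nil => simp at hp; omega
    | @cons _ w _ hadj p' =>
      have hw : G.dist u w < G.dist u v := by
        have h1 : G.dist u w ≤ p'.reverse.length := SimpleGraph.dist_le _
        have h2 : p'.reverse.length = p'.length := p'.length_reverse
        have h3 : G.dist u v = G.dist v u := SimpleGraph.dist_comm
        simp only [SimpleGraph.Walk.length_cons] at hp
        omega
      rw [hG, eGraph, SimpleGraph.fromRel_adj] at hadj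
      obtain ⟨-, ⟨e, he, h1, h2⟩ | ⟨e, he, h1, h2⟩⟩ := hadj
      · exact ⟨e, he, Or.inl ⟨h1, by rwa [h2]⟩⟩
      · exact ⟨e, he, Or.inr ⟨h2, by rwa [h1]⟩⟩
  choose f hfT hf using key
  rcases le_or_gt n 1 with hn | hn
  · omega
  obtain ⟨v0, hv0⟩ : ∃ v0 : Fin n, v0 ≠ u := by
    have := Fintype.exists_ne_of_one_lt_card (by simpa : 1 < Fintype.card (Fin n)) u
    exact this
  haveI : Nonempty E := ⟨f v0 hv0⟩
  have : (univ.erase u).card ≤ T.card := by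
    apply Finset.card_le_card_of_injOn (fun v => if h : v = u then Classical.arbitrary E else f v h)
    · intro v hv
      rw [mem_coe, mem_erase] at hv
      simp only [dif_neg hv.1]
      exact hfT v hv.1
    · intro v hv v' hv' heq
      rw [mem_coe, mem_erase] at hv hv'
      simp only [dif_neg hv.1, dif_neg hv'.1] at heq
      by_contra hne
      rcases hf v hv.1 with ⟨h1, h2⟩ | ⟨h1, h2⟩ <;>
        rcases hf v' hv'.1 with ⟨h1', h2'⟩ | ⟨h1', h2'⟩ <;>
        rw [heq] at h1 h2
      · exact hne (h1.symm.trans h1')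
      · rw [h1'] at h2; rw [h1] at h2'; omega
      · rw [h1'] at h2; rw [h1] at h2'; omega
      · exact hne (h1.symm.trans h1')
  rwa [card_erase_of_mem (mem_univ u), card_univ, Fintype.card_fin] at this

private lemma fiber_count {k : ℕ} [Fintype E] [DecidableEq E] (ψ : E → Fin k)
    (hcard : Fintype.card E = k * n - k) (hn : 1 ≤ n)
    (hge : ∀ i, n - 1 ≤ (univ.filter fun e => ψ e = i).card) :
    ∀ i, (univ.filter fun e => ψ e = i).card = n - 1 := by
  obtain ⟨m, rfl⟩ : ∃ m, n = m + 1 := ⟨n - 1, by omega⟩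
  have hsum : ∑ i : Fin k, (univ.filter fun e => ψ e = i).card = k * m := by
    rw [← Finset.card_eq_sum_card_fiberwise (fun e _ => mem_univ (ψ e))]
    rw [card_univ, hcard, Nat.mul_add, Nat.mul_one, Nat.add_sub_cancel]
  by_contra hcon
  push_neg at hcon
  obtain ⟨i₀, hi₀⟩ := hcon
  have hlt : ∑ _i : Fin k, m < ∑ i : Fin k, (univ.filter fun e => ψ e = i).card := by
    apply Finset.sum_lt_sum (fun i _ => by simpa using hge i)
    exact ⟨i₀, mem_univ _, by have := hge i₀; simp at this ⊢; omega⟩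
  simp only [Finset.sum_const, card_univ, Fintype.card_fin, smul_eq_mul] at hlt
  omega

end GraphLemmas

private def patRow {n k : ℕ} {E : Type} (tail head : E → Fin n) (red : E → Bool)
    (a : ℕ) (u : Fin n) (s : E ⊕ Fin k) (i : Fin k) (c : Fin n × Fin k) : ℝ :=
  Sum.elim
    (fun e => if c.2 = i then
        (if red e = true ∧ a ≤ (i : ℕ) then 0
         else if c.1 = tail e then 1 else if c.1 = head e then -1 else 0)
      else 0)
    (fun t => if i = t ∧ c = (u, t) then 1 else 0) s

private def PM {n k : ℕ} {E : Type} (tail head : E → Fin n) (red : E → Bool)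
    (a : ℕ) (u : Fin n) (σ : (E ⊕ Fin k) ≃ (Fin n × Fin k)) (ψ : E → Fin k) :
    Matrix (Fin n × Fin k) (Fin n × Fin k) ℝ :=
  Matrix.of fun r c =>
    patRow tail head red a u (σ.symm r) (Sum.elim ψ id (σ.symm r)) c

variable {n k : ℕ} {E : Type} (tail head : E → Fin n) (red : E → Bool)
  (a : ℕ) (u : Fin n) (σ : (E ⊕ Fin k) ≃ (Fin n × Fin k))

private lemma mulVec_PM (hlt : ∀ e, tail e < head e) (ψ : E → Fin k)
    (x : Fin n × Fin k → ℝ) (s : E ⊕ Fin k) :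
    (PM tail head red a u σ ψ).mulVec x (σ s) =
      Sum.elim
        (fun e => if red e = true ∧ a ≤ (ψ e : ℕ) then 0
          else x (tail e, ψ e) - x (head e, ψ e))
        (fun t => x (u, t)) s := by
  classical
  have hPM : ∀ c, (PM tail head red a u σ ψ) (σ s) c =
      patRow tail head red a u s (Sum.elim ψ id s) c := by
    intro c; simp [PM]
  unfold Matrix.mulVec dotProduct
  simp only [hPM]
  cases s with
  | inl e =>
    by_cases hred : red e = true ∧ a ≤ ((ψ e : Fin k) : ℕ)
    · have hrow : ∀ c : Fin n × Fin k,
          patRow tail head red a u (Sum.inl e) (Sum.elim ψ id (Sum.inl e)) c * x c = 0 := by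
        intro c; simp [patRow, hred]
      rw [Finset.sum_congr rfl fun c _ => hrow c]
      simp [hred]
    · have hth : ¬ tail e = head e := ne_of_lt (hlt e)
      have hrow : ∀ c : Fin n × Fin k,
          patRow tail head red a u (Sum.inl e) (Sum.elim ψ id (Sum.inl e)) c * x c =
          (if c = (tail e, ψ e) then x c else 0) +
          (if c = (head e, ψ e) then -x c else 0) := by
        intro c
        rcases c with ⟨v, j⟩
        simp only [patRow, Sum.elim_inl, Prod.mk.injEq]
        by_cases hj : j = ψ e
        · subst hj
          by_cases h1 : v = tail e
          · have h2 : ¬ v = head e := by rw [h1]; exact hth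
            simp [h1, h2, hred]
            exact fun h => absurd h hth
          · by_cases h2 : v = head e
            · have h3 : ¬ head e = tail e := fun h => hth h.symm
              simp [h1, h2, hred, h3]
            · simp [h1, h2, hred]
        · simp [hj]
      rw [Finset.sum_congr rfl fun c _ => hrow c, Finset.sum_add_distrib,
        Finset.sum_ite_eq' univ ((tail e, ψ e) : Fin n × Fin k) x,
        Finset.sum_ite_eq' univ ((head e, ψ e) : Fin n × Fin k) (fun c => -x c)]
      simp [hred, sub_eq_add_neg]
  | inr t =>
    have hrow : ∀ c : Fin n × Fin k,
        patRow tail head red a u (Sum.inr t) (Sum.elim ψ id (Sum.inr t)) c * x c =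
        (if c = (u, t) then x c else 0) := by
      intro c
      simp only [patRow, Sum.elim_inr, id_eq]
      by_cases h : c = (u, t) <;> simp [h]
    rw [Finset.sum_congr rfl fun c _ => hrow c, Finset.sum_ite_eq' univ ((u, t)) x]
    simp

section DetPM
variable {n k : ℕ} {E : Type} {tail head : E → Fin n} {red : E → Bool}
  {a : ℕ} {u : Fin n} {σ : (E ⊕ Fin k) ≃ (Fin n × Fin k)}

private lemma det_PM_ne_zero_iff [Fintype E] [DecidableEq E]
    (hlt : ∀ e, tail e < head e) (hcard : Fintype.card E = k * n - k)
    (hn : 1 ≤ n) (ψ : E → Fin k) :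
    (PM tail head red a u σ ψ).det ≠ 0 ↔
      ((∀ e, red e = true → (ψ e : ℕ) < a) ∧
        ∀ i, IsSpanningTree tail head (univ.filter fun e => ψ e = i)) := by
  classical
  constructor
  · intro hdet
    have hred : ∀ e, red e = true → (ψ e : ℕ) < a := by
      intro e hre
      by_contra hge
      push_neg at hge
      refine hdet (Matrix.det_eq_zero_of_row_eq_zero (σ (Sum.inl e)) fun c => ?_)
      simp [PM, patRow, hre, hge]
    have hker : ¬ ∃ x ≠ 0, (PM tail head red a u σ ψ).mulVec x = 0 :=
      fun h => hdet (Matrix.exists_mulVec_eq_zero_iff.mp h)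
    have hconn : ∀ i, (eGraph tail head (univ.filter fun e => ψ e = i)).Connected := by
      intro i
      by_contra hC
      obtain ⟨y, hy0, hyu, hyT⟩ := eGraph_not_connected tail head u hC
      apply hker
      refine ⟨fun c => if c.2 = i then y c.1 else 0, ?_, ?_⟩
      · obtain ⟨v, hv⟩ := Function.ne_iff.mp hy0
        exact Function.ne_iff.mpr ⟨(v, i), by simpa using hv⟩
      · funext r
        obtain ⟨s, rfl⟩ : ∃ s, σ s = r := ⟨σ.symm r, σ.apply_symm_apply r⟩
        rw [mulVec_PM tail head red a u σ hlt]
        cases s with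
        | inl e =>
          simp only [Sum.elim_inl, Pi.zero_apply]
          by_cases hre : red e = true ∧ a ≤ (ψ e : ℕ)
          · rw [if_pos hre]
          · rw [if_neg hre]
            by_cases hi : ψ e = i
            · simp only [hi, if_pos rfl]
              rw [hyT e (by simp [hi]), sub_self]
            · simp [hi]
        | inr t =>
          simp only [Sum.elim_inr, Pi.zero_apply]
          by_cases ht : (t : Fin k) = i
          · simp [ht, hyu]
          · simp [ht]
    have hge : ∀ i, n - 1 ≤ (univ.filter fun e => ψ e = i).card :=
      fun i => card_le_of_connected tail head u (hconn i)
    have hfc := fiber_count ψ hcard hn hge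
    exact ⟨hred, fun i => ⟨hfc i, hconn i⟩⟩
  · rintro ⟨hred, htree⟩
    rw [Ne, ← Matrix.exists_mulVec_eq_zero_iff]
    rintro ⟨x, hx0, hx⟩
    apply hx0
    have hrow : ∀ s, (PM tail head red a u σ ψ).mulVec x (σ s) = 0 := fun s =>
      congrFun hx (σ s)
    have hy : ∀ i : Fin k, (fun v => x (v, i)) = 0 := by
      intro i
      refine eGraph_kernel_of_connected tail head u (htree i).2 _ ?_ ?_
      · intro e he
        rw [mem_filter] at he
        have := hrow (Sum.inl e)
        rw [mulVec_PM tail head red a u σ hlt] at this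
        simp only [Sum.elim_inl] at this
        have hnotred : ¬ (red e = true ∧ a ≤ (ψ e : ℕ)) := by
          rintro ⟨h1, h2⟩
          exact absurd (hred e h1) (by omega)
        rw [if_neg hnotred, sub_eq_zero] at this
        simpa [he.2] using this
      · have := hrow (Sum.inr i)
        rw [mulVec_PM tail head red a u σ hlt] at this
        simpa using this
    funext c
    exact congrFun (hy c.2) c.1

end DetPM

section Expansion
variable {n k : ℕ} {E : Type} (tail head : E → Fin n) (red : E → Bool)
  (a : ℕ) (u : Fin n) (σ : (E ⊕ Fin k) ≃ (Fin n × Fin k))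

private lemma pureCond_expansion [Fintype E] [DecidableEq E] :
    pureCond k a tail head red id u σ =
      ∑ ψ : E → Fin k,
        (∏ e : E, (X (e, ψ e) : MvPolynomial (E × Fin k) ℝ)) *
          C ((PM tail head red a u σ ψ).det) := by
  classical
  set S := MvPolynomial (E × Fin k) ℝ
  set M : Matrix (Fin n × Fin k) (Fin n × Fin k) S := Matrix.of fun r c : Fin n × Fin k =>
    Sum.elim
      (fun e =>
        if red e = true ∧ a ≤ (c.2 : ℕ) then 0
        else if c.1 = tail e then (X (id e, c.2) : S)
        else if c.1 = head e then -X (id e, c.2)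
        else 0)
      (fun i => if c = (u, i) then 1 else 0)
      (σ.symm r) with hM
  have h0 : pureCond k a tail head red id u σ = (M.submatrix σ σ).det :=
    (Matrix.det_submatrix_equiv_self σ M).symm
  set N := M.submatrix σ σ with hN
  -- coefficient functions
  set coef : (E ⊕ Fin k) → Fin k → S :=
    Sum.elim (fun e i => (X (e, i) : S)) (fun t i => if i = t then 1 else 0) with hcoef
  set rowP : (E ⊕ Fin k) → Fin k → ((E ⊕ Fin k) → S) :=
    fun s i d => C (patRow tail head red a u s i (σ d)) with hrowP
  -- row decomposition
  have hdecomp : ∀ s : E ⊕ Fin k, (N s) = ∑ i : Fin k, coef s i • rowP s i := by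
    intro s
    funext d
    simp only [Finset.sum_apply, Pi.smul_apply, smul_eq_mul]
    rw [hN]
    show M (σ s) (σ d) = _
    rw [hM]
    obtain ⟨v, j⟩ : ∃ v j, σ d = (v, j) := ⟨(σ d).1, (σ d).2, rfl⟩
    simp only [Matrix.of_apply, Equiv.symm_apply_apply]
    cases s with
    | inl e =>
      rw [Finset.sum_eq_single ((σ d).2)]
      · simp only [hcoef, hrowP, Sum.elim_inl, patRow]
        by_cases h1 : red e = true ∧ a ≤ ((σ d).2 : ℕ)
        · simp [h1]
        · by_cases h2 : (σ d).1 = tail e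
          · simp [h1, h2]
          · by_cases h3 : (σ d).1 = head e
            · have h4 : ¬ head e = tail e := fun h => h2 (h3.trans h)
              have hC : (C (-1 : ℝ) : S) = -1 := by
                rw [map_neg, map_one]
              simp [h1, h2, h3, h4, hC] <;> ring
            · simp [h1, h2, h3]
      · intro i _ hi
        simp only [hcoef, hrowP, Sum.elim_inl, patRow]
        rw [if_neg (fun h => hi h.symm)]
        simp
      · simp
    | inr t =>
      rw [Finset.sum_eq_single t]
      · simp only [hcoef, hrowP, Sum.elim_inr, patRow]
        by_cases h1 : σ d = (u, t) <;> simp [h1]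
      · intro i _ hi
        simp only [hcoef, hrowP, Sum.elim_inr, patRow]
        simp [hi]
      · simp
  -- multilinear expansion
  have hdet1 : N.det = Matrix.detRowAlternating N := rfl
  have hNfun : N = fun s => ∑ i ∈ (univ : Finset (Fin k)), coef s i • rowP s i := by
    funext s; rw [← hdecomp s]
  rw [h0, hdet1, hNfun]
  rw [show (Matrix.detRowAlternating fun s => ∑ i ∈ (univ : Finset (Fin k)), coef s i • rowP s i) =
      (Matrix.detRowAlternating : ((E ⊕ Fin k) → S) [⋀^(E ⊕ Fin k)]→ₗ[S] S).toMultilinearMap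
        (fun s => ∑ i ∈ (univ : Finset (Fin k)), coef s i • rowP s i) from rfl]
  rw [MultilinearMap.map_sum_finset]
  rw [Fintype.piFinset_univ]
  -- each term
  have hterm : ∀ r : (E ⊕ Fin k) → Fin k,
      (Matrix.detRowAlternating : ((E ⊕ Fin k) → S) [⋀^(E ⊕ Fin k)]→ₗ[S] S).toMultilinearMap
        (fun s => coef s (r s) • rowP s (r s)) =
      (∏ s : E ⊕ Fin k, coef s (r s)) •
        C ((Matrix.of fun s d => patRow tail head red a u s (r s) (σ d)).det) := by
    intro r
    rw [MultilinearMap.map_smul_univ]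
    congr 1
    have : (fun s => rowP s (r s)) =
        ((Matrix.of fun s d => patRow tail head red a u s (r s) (σ d)).map
          (C : ℝ →+* S) : Matrix (E ⊕ Fin k) (E ⊕ Fin k) S) := rfl
    show Matrix.det ((Matrix.of fun s d => patRow tail head red a u s (r s) (σ d)).map
          (C : ℝ →+* S)) = _
    rw [← RingHom.mapMatrix_apply, ← RingHom.map_det]
  simp only [hterm]
  -- reindex the sum
  rw [← Equiv.sum_comp (Equiv.sumArrowEquivProdArrow E (Fin k) (Fin k)).symm
    (fun r => (∏ s : E ⊕ Fin k, coef s (r s)) •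
      C ((Matrix.of fun s d => patRow tail head red a u s (r s) (σ d)).det))]
  rw [Fintype.sum_prod_type]
  refine Finset.sum_congr rfl fun ψ _ => ?_
  rw [Finset.sum_eq_single (id : Fin k → Fin k)]
  · have helim : ((Equiv.sumArrowEquivProdArrow E (Fin k) (Fin k)).symm (ψ, id)) =
        Sum.elim ψ id := by
      funext s; cases s <;> rfl
    rw [helim]
    rw [Fintype.prod_sum_type]
    simp only [hcoef, Sum.elim_inl, Sum.elim_inr, id_eq, if_true]
    rw [Finset.prod_const_one, mul_one, smul_eq_mul]
    congr 2
    rw [← Matrix.det_submatrix_equiv_self σ (PM tail head red a u σ ψ)]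
    congr 1
    funext s d
    simp [PM, Matrix.submatrix]
  · intro τ _ hτ
    obtain ⟨t, ht⟩ := Function.ne_iff.mp hτ
    have helim : ((Equiv.sumArrowEquivProdArrow E (Fin k) (Fin k)).symm (ψ, τ)) =
        Sum.elim ψ τ := by
      funext s; cases s <;> rfl
    rw [helim, Fintype.prod_sum_type]
    have : (∏ t : Fin k, coef (Sum.inr t) ((Sum.elim ψ τ) (Sum.inr t))) = 0 := by
      refine Finset.prod_eq_zero (mem_univ t) ?_
      simp only [hcoef, Sum.elim_inr]
      rw [if_neg (by simpa using ht)]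
    rw [this, mul_zero, zero_smul]
  · simp

end Expansion

section Monomials
variable {E : Type} [Fintype E] [DecidableEq E] {k : ℕ}

private lemma prod_X_single {σ' : Type} [DecidableEq σ'] (s : Finset E) (f : E → σ') :
    (∏ e ∈ s, (X (f e) : MvPolynomial σ' ℝ)) =
      monomial (∑ e ∈ s, Finsupp.single (f e) 1) 1 := by
  induction s using Finset.induction_on with
  | empty => simp
  | @insert a s ha ih =>
    have hX : (X (f a) : MvPolynomial σ' ℝ) = monomial (Finsupp.single (f a) 1) 1 := by
      rw [← pow_one (X (f a) : MvPolynomial σ' ℝ), X_pow_eq_monomial]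
    rw [prod_insert ha, sum_insert ha, ih, hX, monomial_mul, one_mul]

private lemma sum_monomial_ne_zero_iff (r : (E → Fin k) → ℝ) :
    (∑ ψ : E → Fin k,
      (∏ e : E, (X (e, ψ e) : MvPolynomial (E × Fin k) ℝ)) * C (r ψ)) ≠ 0 ↔
    ∃ ψ, r ψ ≠ 0 := by
  classical
  have hd : ∀ ψ : E → Fin k, ∀ e : E, ∀ i : Fin k,
      (∑ e' : E, Finsupp.single ((e', ψ e') : E × Fin k) (1 : ℕ)) (e, i) =
        if ψ e = i then 1 else 0 := by
    intro ψ e i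
    rw [Finsupp.finset_sum_apply]
    rw [Finset.sum_eq_single e]
    · by_cases h : ψ e = i
      · rw [h]; simp
      · rw [Finsupp.single_apply, if_neg (by simp [h]), if_neg h]
    · intro e' _ he'
      rw [Finsupp.single_apply, if_neg (by simp [he'])]
    · simp
  have hinj : Function.Injective
      (fun ψ : E → Fin k => ∑ e : E, Finsupp.single ((e, ψ e) : E × Fin k) (1 : ℕ)) := by
    intro ψ ψ' h
    dsimp only [] at h
    funext e
    have h1 := hd ψ e (ψ e)
    have h2 := hd ψ' e (ψ e)
    rw [h, h2, if_pos rfl] at h1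
    by_contra hne
    rw [if_neg (fun hh => hne hh.symm)] at h1
    exact one_ne_zero h1.symm
  have hsummand : ∀ ψ : E → Fin k,
      (∏ e : E, (X (e, ψ e) : MvPolynomial (E × Fin k) ℝ)) * C (r ψ) =
      monomial (∑ e : E, Finsupp.single ((e, ψ e) : E × Fin k) (1 : ℕ)) (r ψ) := by
    intro ψ
    rw [prod_X_single univ (fun e => ((e, ψ e) : E × Fin k)), C_apply, monomial_mul,
      add_zero, one_mul]
  constructor
  · intro hne
    by_contra hcon
    push_neg at hcon
    apply hne
    refine Finset.sum_eq_zero fun ψ _ => ?_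
    rw [hcon ψ, map_zero, mul_zero]
  · rintro ⟨ψ₀, hψ₀⟩
    intro h0
    apply hψ₀
    have hcoeff := congrArg
      (coeff (∑ e : E, Finsupp.single ((e, ψ₀ e) : E × Fin k) (1 : ℕ))) h0
    rw [coeff_zero, MvPolynomial.coeff_sum] at hcoeff
    rw [← hcoeff]
    rw [Finset.sum_congr rfl fun ψ _ => by rw [hsummand ψ, coeff_monomial]]
    rw [Finset.sum_eq_single ψ₀]
    · rw [if_pos rfl]
    · intro ψ _ hne
      rw [if_neg (fun h => hne (hinj h))]
    · simp

end Monomials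

section Translate
variable {n : ℕ} {E : Type} [Fintype E] [DecidableEq E]
  {tail head : E → Fin n} {red : E → Bool} {a b : ℕ}

private lemma exists_psi_iff :
    (∃ ψ : E → Fin (a + b), (∀ e, red e = true → ((ψ e : ℕ) < a)) ∧
        ∀ i, IsSpanningTree tail head (univ.filter fun e => ψ e = i)) ↔
      ∃ B' ⊆ univ.filter fun e => red e = false,
        IsTreePartition tail head a ((univ.filter fun e => red e = true) ∪ B') ∧
        IsTreePartition tail head b ((univ.filter fun e => red e = false) \ B') := by
  classical
  set R : Finset E := univ.filter fun e => red e = true with hR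
  set B : Finset E := univ.filter fun e => red e = false with hB
  constructor
  · rintro ⟨ψ, hred, htree⟩
    set T : Fin a → Finset E := fun i => univ.filter fun e => ψ e = Fin.castAdd b i with hT
    set U : Fin b → Finset E := fun j => univ.filter fun e => ψ e = Fin.natAdd a j with hU
    set A₁ : Finset E := univ.biUnion T with hA₁
    set A₂ : Finset E := univ.biUnion U with hA₂
    have memA₁ : ∀ e, e ∈ A₁ ↔ (ψ e : ℕ) < a := by
      intro e
      rw [hA₁, mem_biUnion]
      constructor
      · rintro ⟨i, -, hi⟩
        rw [hT] at hi
        simp only [mem_filter] at hi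
        rw [hi.2]
        simpa using i.2
      · intro h
        refine ⟨⟨(ψ e : ℕ), h⟩, mem_univ _, ?_⟩
        rw [hT]
        simp only [mem_filter, mem_univ, true_and]
        apply Fin.ext
        simp [Fin.coe_castAdd]
    have memA₂ : ∀ e, e ∈ A₂ ↔ a ≤ (ψ e : ℕ) := by
      intro e
      rw [hA₂, mem_biUnion]
      constructor
      · rintro ⟨j, -, hj⟩
        rw [hU] at hj
        simp only [mem_filter] at hj
        rw [hj.2]
        simp [Fin.coe_natAdd]
      · intro h
        have hlt : (ψ e : ℕ) - a < b := by have := (ψ e).2; omega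
        refine ⟨⟨(ψ e : ℕ) - a, hlt⟩, mem_univ _, ?_⟩
        rw [hU]
        simp only [mem_filter, mem_univ, true_and]
        apply Fin.ext
        simp only [Fin.coe_natAdd]
        omega
    refine ⟨A₁.filter fun e => red e = false, ?_, ?_, ?_⟩
    · intro e he
      rw [mem_filter] at he
      rw [hB, mem_filter]
      exact ⟨mem_univ e, he.2⟩
    · -- R ∪ B' = A₁, tree partition by T
      have hRB : R ∪ A₁.filter (fun e => red e = false) = A₁ := by
        ext e
        simp only [hR, mem_union, mem_filter, mem_univ, true_and]
        constructor
        · rintro (h | ⟨h, -⟩)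
          · exact (memA₁ e).2 (hred e h)
          · exact h
        · intro h
          by_cases hre : red e = true
          · exact Or.inl hre
          · exact Or.inr ⟨h, by simpa using hre⟩
      rw [hRB]
      refine ⟨T, fun i => htree _, ?_, rfl⟩
      intro i j hij
      rw [Finset.disjoint_left]
      intro e hei hej
      rw [hT] at hei hej
      simp only [mem_filter] at hei hej
      apply hij
      have h5 := congrArg Fin.val (hei.2.symm.trans hej.2)
      simp only [Fin.coe_castAdd] at h5
      exact Fin.ext h5
    · -- B \ B' = A₂
      have hBB : B \ A₁.filter (fun e => red e = false) = A₂ := by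
        ext e
        simp only [hB, mem_sdiff, mem_filter, mem_univ, true_and, memA₂]
        constructor
        · rintro ⟨h1, h2⟩
          have hnA : e ∉ A₁ := fun hA => h2 ⟨hA, h1⟩
          rw [memA₁] at hnA
          omega
        · intro h
          have hnA₁ : e ∉ A₁ := by rw [memA₁]; omega
          have hnred : red e = false := by
            by_contra hre
            have : red e = true := by simpa using hre
            exact absurd ((memA₁ e).2 (hred e this)) hnA₁
          exact ⟨hnred, fun hc => hnA₁ hc.1⟩
      rw [hBB]
      refine ⟨U, fun j => htree _, ?_, rfl⟩
      intro i j hij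
      rw [Finset.disjoint_left]
      intro e hei hej
      rw [hU] at hei hej
      simp only [mem_filter] at hei hej
      apply hij
      have := hei.2.symm.trans hej.2
      have := congrArg Fin.val this
      simp only [Fin.coe_natAdd] at this
      exact Fin.ext (by omega)
  · rintro ⟨B', hB', ⟨T, hT1, hT2, hT3⟩, ⟨U, hU1, hU2, hU3⟩⟩
    have hB'B : B' ⊆ B := hB'
    have hcover : ∀ e, e ∉ R ∪ B' → e ∈ B \ B' := by
      intro e he
      rw [mem_union, not_or] at he
      rw [mem_sdiff]
      refine ⟨?_, he.2⟩
      simp only [hB, mem_filter, mem_univ, true_and]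
      by_contra h
      refine he.1 ?_
      simp only [hR, mem_filter, mem_univ, true_and]
      simpa using h
    have hch1 : ∀ e (_ : e ∈ R ∪ B'), ∃ i, e ∈ T i := by
      intro e he
      have : e ∈ univ.biUnion T := by rw [hT3]; exact he
      rw [mem_biUnion] at this
      obtain ⟨i, -, hi⟩ := this
      exact ⟨i, hi⟩
    have hch2 : ∀ e (_ : e ∉ R ∪ B'), ∃ j, e ∈ U j := by
      intro e he
      have : e ∈ univ.biUnion U := by rw [hU3]; exact hcover e he
      rw [mem_biUnion] at this
      obtain ⟨j, -, hj⟩ := this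
      exact ⟨j, hj⟩
    refine ⟨fun e => if h : e ∈ R ∪ B' then Fin.castAdd b (hch1 e h).choose
      else Fin.natAdd a (hch2 e h).choose, ?_, ?_⟩
    · intro e hre
      have he : e ∈ R ∪ B' := mem_union_left _
        (by simp only [hR, mem_filter, mem_univ, true_and]; exact hre)
      simp only [dif_pos he]
      simpa using ((hch1 e he).choose).2
    · intro i
      -- fiber computation
      induction i using Fin.addCases with
      | left i =>
        have hfib : (univ.filter fun e =>
            (if h : e ∈ R ∪ B' then Fin.castAdd b (hch1 e h).choose
              else Fin.natAdd a (hch2 e h).choose) = Fin.castAdd b i) = T i := by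
          ext e
          simp only [mem_filter, mem_univ, true_and]
          by_cases h : e ∈ R ∪ B'
          · rw [dif_pos h]
            constructor
            · intro hc
              have : (hch1 e h).choose = i := by
                have := congrArg Fin.val hc
                simp only [Fin.coe_castAdd] at this
                exact Fin.ext this
              rw [← this]
              exact (hch1 e h).choose_spec
            · intro hei
              congr 1
              by_contra hne
              exact (Finset.disjoint_left.mp (hT2 _ _ hne) (hch1 e h).choose_spec) hei
          · rw [dif_neg h]
            constructor
            · intro hc
              have := congrArg Fin.val hc
              simp only [Fin.coe_natAdd, Fin.coe_castAdd] at this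
              have := i.2
              omega
            · intro hei
              exfalso
              apply h
              rw [← hT3]
              exact mem_biUnion.mpr ⟨i, mem_univ _, hei⟩
        rw [hfib]
        exact hT1 i
      | right j =>
        have hfib : (univ.filter fun e =>
            (if h : e ∈ R ∪ B' then Fin.castAdd b (hch1 e h).choose
              else Fin.natAdd a (hch2 e h).choose) = Fin.natAdd a j) = U j := by
          ext e
          simp only [mem_filter, mem_univ, true_and]
          by_cases h : e ∈ R ∪ B'
          · rw [dif_pos h]
            constructor
            · intro hc
              have := congrArg Fin.val hc
              simp only [Fin.coe_natAdd, Fin.coe_castAdd] at this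
              have := ((hch1 e h).choose).2
              omega
            · intro hei
              exfalso
              have heB : e ∈ B \ B' := by
                rw [← hU3]; exact mem_biUnion.mpr ⟨j, mem_univ _, hei⟩
              rw [mem_sdiff] at heB
              rcases mem_union.mp h with hr | hb'
              · simp only [hR, mem_filter, mem_univ, true_and] at hr
                have hbe := heB.1
                simp only [hB, mem_filter, mem_univ, true_and] at hbe
                rw [hr] at hbe
                exact Bool.noConfusion hbe
              · exact heB.2 hb'
          · rw [dif_neg h]
            constructor
            · intro hc
              have : (hch2 e h).choose = j := by
                have := congrArg Fin.val hc
                simp only [Fin.coe_natAdd] at this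
                exact Fin.ext (by omega)
              rw [← this]
              exact (hch2 e h).choose_spec
            · intro hej
              congr 1
              by_contra hne
              exact (Finset.disjoint_left.mp (hU2 _ _ hne) (hch2 e h).choose_spec) hej
        rw [hfib]
        exact hU1 j

end Translate

end StmtAux

/-- the pure condition of the generic `[a,b]`-frame, tied down at `u`,
is nonzero iff there is `B' ⊆ B` with `R ∪ B'` the disjoint union of `a` spanning
trees and `B \ B'` the disjoint union of `b` spanning trees. -/
theorem stmt0 {n : ℕ} {E : Type} [Fintype E] [DecidableEq E]
    (tail head : E → Fin n) (hlt : ∀ e, tail e < head e)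
    (red : E → Bool) (a b : ℕ) (ha : 0 < a) (hb : 0 < b)
    (hE : Fintype.card E = (a + b) * n - (a + b)) (u : Fin n)
    (σ : (E ⊕ Fin (a + b)) ≃ (Fin n × Fin (a + b))) :
    pureCond (a + b) a tail head red id u σ ≠ 0 ↔
      ∃ B' ⊆ Finset.univ.filter fun e => red e = false,
        IsTreePartition tail head a ((Finset.univ.filter fun e => red e = true) ∪ B') ∧
        IsTreePartition tail head b ((Finset.univ.filter fun e => red e = false) \ B') := by
  classical
  have hn : 1 ≤ n := u.pos
  rw [pureCond_expansion tail head red a u σ, sum_monomial_ne_zero_iff,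
    ← exists_psi_iff]
  constructor
  · rintro ⟨ψ, h⟩
    exact ⟨ψ, (det_PM_ne_zero_iff hlt hE hn ψ).mp h⟩
  · rintro ⟨ψ, h⟩
    exact ⟨ψ, (det_PM_ne_zero_iff hlt hE hn ψ).mpr h⟩
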